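/- Let T be a standard finite tree and let f be a strictly increasing, level preserving, and downwards closed partial function from T to T. Then f is injective if and only if for all a₀, a₁ in the domain of f, ht(a₀ ∧ a₁) = ht(f(a₀) ∧ f(a₁)). -/

import Mathlib

noncomputable section
open scoped Classical

namespace AKST

/-- The first uncountable ordinal. -/
def ω1 : Ordinal := (Cardinal.aleph 1).ord

/-- The second uncountable ordinal. -/
def ω2 : Ordinal := (Cardinal.aleph 2).ord

/-- The height of a countable ordinal `γ`: the unique `α` with `ω·α ≤ γ < ω·(α+1)`. -/
def ht (γ : Ordinal) : Ordinal := γ / Ordinal.omega0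

/-- A standard finite tree. -/
structure SFT where
  elems : Finset Ordinal
  lt : Ordinal → Ordinal → Prop
  zero_mem : 0 ∈ elems
  mem_ok : ∀ x ∈ elems, x = 0 ∨ (Ordinal.omega0 ≤ x ∧ x < ω1)
  lt_mem : ∀ {x y}, lt x y → x ∈ elems ∧ y ∈ elems
  lt_trans' : ∀ {x y z}, lt x y → lt y z → lt x z
  lt_irrefl' : ∀ x, ¬ lt x x
  pred_linear : ∀ {x y z}, lt y x → lt z x → lt y z ∨ y = z ∨ lt z y
  lt_ht : ∀ {x y}, lt x y → ht x < ht y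
  pred_level : ∀ x ∈ elems, ∀ α, (∃ z ∈ elems, ht z = α) → α < ht x →
    ∃ y ∈ elems, ht y = α ∧ lt y x

namespace SFT

/-- The non-strict tree order. -/
def le (T : SFT) (x y : Ordinal) : Prop := T.lt x y ∨ (x = y ∧ x ∈ T.elems)

/-- `ht[T]`: the set of nonzero heights of elements of `T`. -/
def heights (T : SFT) : Set Ordinal := {α | α ≠ 0 ∧ ∃ x ∈ T.elems, ht x = α}

/-- Level `α` of `T`. -/
def level (T : SFT) (α : Ordinal) : Set Ordinal := {x | x ∈ T.elems ∧ ht x = α}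

/-- `max(ht[T])`. -/
def maxHeight (T : SFT) : Ordinal := sSup T.heights

/-- The least element of `ht[T]` greater than `α`. -/
def minAbove (T : SFT) (α : Ordinal) : Ordinal := sInf {β | β ∈ T.heights ∧ α < β}

/-- The drop-down `x↾α`: the unique element of `T` of height `α` below `x`. -/
def drop (T : SFT) (α x : Ordinal) : Ordinal :=
  if h : ∃ y, y ∈ T.elems ∧ ht y = α ∧ T.lt y x then h.choose else 0

/-- `z` is the meet of `x` and `y` in `T`. -/
def isMeet (T : SFT) (x y z : Ordinal) : Prop :=
  T.le z x ∧ T.le z y ∧ ∀ w, T.le w x → T.le w y → T.le w z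

/-- The meet `x ∧_T y`. -/
def meet (T : SFT) (x y : Ordinal) : Ordinal :=
  if h : ∃ z, T.isMeet x y z then h.choose else 0

/-- `U` extends `T`. -/
def Ext (T U : SFT) : Prop :=
  (↑T.elems : Set Ordinal) ⊆ ↑U.elems ∧ ∀ {x y}, T.lt x y → U.lt x y

/-- `X` has unique drop-downs to `α` in `T`. -/
def UniqueDrops (T : SFT) (α : Ordinal) (X : Set Ordinal) : Prop :=
  ∀ x ∈ X, ∀ y ∈ X, T.drop α x = T.drop α y → x = y

/-- `U` is a simple extension of `T`. -/
def SimpleExt (U T : SFT) : Prop :=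
  Ext T U ∧
  (∀ x ∈ U.elems, x ∉ T.elems → ht x ∉ T.heights) ∧
  (∀ α, α ∈ U.heights → α ∉ T.heights → α < T.maxHeight →
     U.UniqueDrops α (T.level (T.minAbove α)))

/-- `x` and `y` are incomparable in `T`. -/
def Incomp (T : SFT) (x y : Ordinal) : Prop := x ≠ y ∧ ¬ T.lt x y ∧ ¬ T.lt y x

/-- `T` is normal: every element has successors at every higher occupied level. -/
def Normal (T : SFT) : Prop :=
  ∀ x ∈ T.elems, ∀ γ ∈ T.heights, ht x < γ → ∃ y ∈ T.elems, ht y = γ ∧ T.lt x y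

end SFT

/-! Partial functions on a tree, represented by their graphs. -/

def dom (f : Set (Ordinal × Ordinal)) : Set Ordinal := {x | ∃ y, (x, y) ∈ f}

def ran (f : Set (Ordinal × Ordinal)) : Set Ordinal := {y | ∃ x, (x, y) ∈ f}

/-- The graph is single-valued. -/
def FuncGraph (f : Set (Ordinal × Ordinal)) : Prop :=
  ∀ {x y y'}, (x, y) ∈ f → (x, y') ∈ f → y = y'

/-- The graph is injective. -/
def InjGraph (f : Set (Ordinal × Ordinal)) : Prop :=
  ∀ {x x' y}, (x, y) ∈ f → (x', y) ∈ f → x = x'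

/-- The graph is a partial function from `T` to `T`. -/
def Carr (T : SFT) (f : Set (Ordinal × Ordinal)) : Prop :=
  ∀ p ∈ f, p.1 ∈ T.elems ∧ p.2 ∈ T.elems

/-- Strictly increasing. -/
def StrictIncr (T : SFT) (f : Set (Ordinal × Ordinal)) : Prop :=
  ∀ {x y x' y'}, (x, y) ∈ f → (x', y') ∈ f → T.lt x x' → T.lt y y'

/-- Level preserving. -/
def LevelPres (f : Set (Ordinal × Ordinal)) : Prop :=
  ∀ p ∈ f, ht p.1 = ht p.2

/-- Downwards closed (the domain is closed under drop-downs). -/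
def DownClosedDom (T : SFT) (f : Set (Ordinal × Ordinal)) : Prop :=
  ∀ x y, (x, y) ∈ f → ∀ β ∈ T.heights, β < ht x →
    ∃ x' y', x' ∈ T.elems ∧ ht x' = β ∧ T.lt x' x ∧ (x', y') ∈ f

/-- No fixed points other than 0. -/
def NoFix (f : Set (Ordinal × Ordinal)) : Prop := ∀ x, (x, x) ∈ f → x = 0

/-- `f` is a standard function on `T`. -/
def IsStdFun (T : SFT) (f : Set (Ordinal × Ordinal)) : Prop :=
  Carr T f ∧ FuncGraph f ∧ InjGraph f ∧ StrictIncr T f ∧ LevelPres f ∧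
    DownClosedDom T f ∧ NoFix f

/-- `f^m(x) = y`, for `m ∈ {-1, 1}`. -/
def appPow (f : Set (Ordinal × Ordinal)) (m : ℤ) (x y : Ordinal) : Prop :=
  (m = 1 ∧ (x, y) ∈ f) ∨ (m = -1 ∧ (y, x) ∈ f)

/-- `X↾α` and `X` are `f`-consistent. -/
def Consistent (T : SFT) (f : Set (Ordinal × Ordinal)) (α : Ordinal) (X : Set Ordinal) : Prop :=
  ∀ x ∈ X, ∀ y ∈ X, ((T.drop α x, T.drop α y) ∈ f ↔ (x, y) ∈ f)

/-- The family `{F τ : τ ∈ A}` is separated on the tuple `a 0, ..., a (n-1)`. -/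
def SepOnTuple (F : Ordinal → Set (Ordinal × Ordinal)) (A : Finset Ordinal)
    (n : ℕ) (a : ℕ → Ordinal) : Prop :=
  ∀ i < n, ∀ j₀ < i, ∀ j₁ < i, ∀ m₀ m₁ : ℤ, ∀ τ₀ ∈ A, ∀ τ₁ ∈ A,
    (m₀ = 1 ∨ m₀ = -1) → (m₁ = 1 ∨ m₁ = -1) →
    appPow (F τ₀) m₀ (a i) (a j₀) → appPow (F τ₁) m₁ (a i) (a j₁) →
    j₀ = j₁ ∧ m₀ = m₁ ∧ τ₀ = τ₁

/-- The family is separated on the set `X`. -/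
def SepOnSet (F : Ordinal → Set (Ordinal × Ordinal)) (A : Finset Ordinal)
    (X : Set Ordinal) : Prop :=
  ∃ (n : ℕ) (a : ℕ → Ordinal), (∀ i < n, ∀ j < n, a i = a j → i = j) ∧
    X = a '' {i | i < n} ∧ SepOnTuple F A n a

/-- The family is `ρ`-separated on the tuple `a 0, ..., a (n-1)` (of elements of level `α`). -/
def RhoSepOnTuple (ρ : Ordinal → Ordinal → Ordinal) (F : Ordinal → Set (Ordinal × Ordinal))
    (A : Finset Ordinal) (α : Ordinal) (n : ℕ) (a : ℕ → Ordinal) : Prop :=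
  ∀ i < n, ∀ j₀ < i, ∀ j₁ < i, ∀ m₀ m₁ : ℤ, ∀ τ₀ ∈ A, ∀ τ₁ ∈ A,
    (m₀ = 1 ∨ m₀ = -1) → (m₁ = 1 ∨ m₁ = -1) →
    appPow (F τ₀) m₀ (a i) (a j₀) → appPow (F τ₁) m₁ (a i) (a j₁) →
    j₀ = j₁ ∧ ((m₀ = m₁ ∧ τ₀ = τ₁) ∨ α ≤ ρ τ₀ τ₁)

/-- The family is `ρ`-separated on the set `X ⊆ T_α`. -/
def RhoSepOnSet (ρ : Ordinal → Ordinal → Ordinal) (F : Ordinal → Set (Ordinal × Ordinal))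
    (A : Finset Ordinal) (α : Ordinal) (X : Set Ordinal) : Prop :=
  ∃ (n : ℕ) (a : ℕ → Ordinal), (∀ i < n, ∀ j < n, a i = a j → i = j) ∧
    X = a '' {i | i < n} ∧ RhoSepOnTuple ρ F A α n a

/-- There is a loop in `X` with respect to the family `{F τ : τ ∈ A}`. -/
def HasLoop (F : Ordinal → Set (Ordinal × Ordinal)) (A : Finset Ordinal)
    (X : Set Ordinal) : Prop :=
  ∃ p : ℕ, 4 ≤ p ∧ ∃ c : ℕ → Ordinal,
    (∀ i < p, c i ∈ X) ∧
    (∀ i < p - 1, ∀ j < p - 1, c i = c j → i = j) ∧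
    c 0 = c (p - 1) ∧
    (∀ i < p - 1, ∃ τ ∈ A, ∃ m : ℤ, (m = 1 ∨ m = -1) ∧ appPow (F τ) m (c i) (c (i + 1)))

/-- `p` is a member of `T ⊗ T`. -/
def InOtimes (T : SFT) (p : Ordinal × Ordinal) : Prop :=
  p.1 ∈ T.elems ∧ p.2 ∈ T.elems ∧ ht p.1 = ht p.2

/-- `f ⊆ T ⊗ T` is downwards closed as a subset of `T ⊗ T`. -/
def DCPairs (T : SFT) (f : Set (Ordinal × Ordinal)) : Prop :=
  ∀ p ∈ f, ∀ q, InOtimes T q → T.le q.1 p.1 → T.le q.2 p.2 → q ∈ f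

/-- The downward closure of `f` in `U`. -/
def dcl (U : SFT) (f : Set (Ordinal × Ordinal)) : Set (Ordinal × Ordinal) :=
  {p | InOtimes U p ∧ ∃ q ∈ f, U.le p.1 q.1 ∧ U.le p.2 q.2}

end AKST

open AKST AKST.SFT

namespace Stmt7Aux
universe u

lemma ht_zero : ht (0 : Ordinal.{u}) = 0 := Ordinal.zero_div _

lemma eq_zero_of_ht_zero (T : SFT) {x : Ordinal} (hx : x ∈ T.elems) (h : ht x = 0) : x = 0 := by
  rcases T.mem_ok x hx with h0 | ⟨hω, _⟩
  · exact h0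
  · exfalso
    have : (0 : Ordinal) < ht x := (Ordinal.div_pos Ordinal.omega0_ne_zero).2 hω
    exact absurd h this.ne'

lemma zero_le (T : SFT) {x : Ordinal} (hx : x ∈ T.elems) : T.le 0 x := by
  by_cases h0 : x = 0
  · exact Or.inr ⟨h0.symm, T.zero_mem⟩
  · have hpos : (0 : Ordinal) < ht x := by
      rcases T.mem_ok x hx with h | ⟨hω, _⟩
      · exact absurd h h0
      · exact (Ordinal.div_pos Ordinal.omega0_ne_zero).2 hω
    obtain ⟨y, hy, hty, hlty⟩ := T.pred_level x hx 0 ⟨0, T.zero_mem, ht_zero⟩ hpos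
    have : y = 0 := eq_zero_of_ht_zero T hy hty
    exact Or.inl (this ▸ hlty)

lemma le_refl (T : SFT) {x : Ordinal} (hx : x ∈ T.elems) : T.le x x := Or.inr ⟨rfl, hx⟩

lemma mem_of_le_left (T : SFT) {x y : Ordinal} (h : T.le x y) : x ∈ T.elems := by
  rcases h with h | ⟨_, h⟩
  · exact (T.lt_mem h).1
  · exact h

lemma mem_of_le_right (T : SFT) {x y : Ordinal} (h : T.le x y) : y ∈ T.elems := by
  rcases h with h | ⟨he, h⟩
  · exact (T.lt_mem h).2
  · exact he ▸ h

lemma ht_le_of_le (T : SFT) {x y : Ordinal} (h : T.le x y) : ht x ≤ ht y := by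
  rcases h with h | ⟨he, _⟩
  · exact (T.lt_ht h).le
  · exact he ▸ le_rfl

lemma eq_of_le_of_ht_eq (T : SFT) {x y : Ordinal} (h : T.le x y) (hht : ht x = ht y) :
    x = y := by
  rcases h with h | ⟨he, _⟩
  · exact absurd hht (T.lt_ht h).ne
  · exact he

lemma le_antisymm' (T : SFT) {x y : Ordinal} (h : T.le x y) (h' : T.le y x) : x = y := by
  rcases h with h | ⟨he, _⟩
  · rcases h' with h' | ⟨he', _⟩
    · exact absurd (T.lt_trans' h h') (T.lt_irrefl' x)
    · exact he'.symm
  · exact he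

lemma eq_of_lt_lt_ht (T : SFT) {y y' x : Ordinal} (h : T.lt y x) (h' : T.lt y' x)
    (hh : ht y = ht y') : y = y' := by
  rcases T.pred_linear h h' with hl | he | hl
  · exact absurd hh (T.lt_ht hl).ne
  · exact he
  · exact absurd hh.symm (T.lt_ht hl).ne

lemma le_total_below (T : SFT) {w w' x : Ordinal} (h : T.le w x) (h' : T.le w' x) :
    T.le w w' ∨ T.le w' w := by
  rcases h with h | ⟨he, hm⟩
  · rcases h' with h' | ⟨he', hm'⟩
    · rcases T.pred_linear h h' with hl | hh | hl
      · exact Or.inl (Or.inl hl)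
      · exact Or.inl (Or.inr ⟨hh, (T.lt_mem h).1⟩)
      · exact Or.inr (Or.inl hl)
    · exact Or.inl (he' ▸ Or.inl h)
  · exact Or.inr (he ▸ h')

lemma exists_isMeet (T : SFT) {x y : Ordinal} (hx : x ∈ T.elems) (hy : y ∈ T.elems) :
    ∃ z, T.isMeet x y z := by
  classical
  set S := T.elems.filter (fun w => T.le w x ∧ T.le w y) with hS
  have h0 : 0 ∈ S := by
    simp only [hS, Finset.mem_filter]
    exact ⟨T.zero_mem, zero_le T hx, zero_le T hy⟩
  obtain ⟨w, hwS, hwmax⟩ := S.exists_max_image ht ⟨0, h0⟩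
  simp only [hS, Finset.mem_filter] at hwS
  refine ⟨w, hwS.2.1, hwS.2.2, fun v hvx hvy => ?_⟩
  have hvS : v ∈ S := by
    simp only [hS, Finset.mem_filter]
    exact ⟨mem_of_le_left T hvx, hvx, hvy⟩
  rcases le_total_below T hvx hwS.2.1 with h | h
  · exact h
  · have : w = v := eq_of_le_of_ht_eq T h (le_antisymm (ht_le_of_le T h) (hwmax v hvS))
    exact this ▸ le_refl T hwS.1

lemma meet_isMeet (T : SFT) {x y : Ordinal} (hx : x ∈ T.elems) (hy : y ∈ T.elems) :
    T.isMeet x y (T.meet x y) := by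
  have hex := exists_isMeet T hx hy
  rw [SFT.meet, dif_pos hex]
  exact hex.choose_spec

lemma meet_eq (T : SFT) {x y z : Ordinal} (h : T.isMeet x y z) : T.meet x y = z := by
  have hx : x ∈ T.elems := mem_of_le_right T h.1
  have hy : y ∈ T.elems := mem_of_le_right T h.2.1
  have hm := meet_isMeet T hx hy
  exact le_antisymm' T (h.2.2 _ hm.1 hm.2.1) (hm.2.2 _ h.1 h.2.1)

lemma ht_mem_heights (T : SFT) {x : Ordinal} (hx : x ∈ T.elems) (h : ht x ≠ 0) :
    ht x ∈ T.heights := ⟨h, x, hx, rfl⟩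

/-- Key lemma 1 (no injectivity needed): if the meet of `a₀, a₁` is strictly below both,
then its height is at most the height of the meet of the images. -/
lemma key1 (T : SFT) (f : Set (Ordinal × Ordinal))
    (hcarr : Carr T f) (hfun : FuncGraph f) (hmono : StrictIncr T f)
    (hlev : LevelPres f) (hdc : DownClosedDom T f)
    {a₀ b₀ a₁ b₁ c : Ordinal} (h₀ : (a₀, b₀) ∈ f) (h₁ : (a₁, b₁) ∈ f)
    (hlt₀ : T.lt c a₀) (hlt₁ : T.lt c a₁) :
    ht c ≤ ht (T.meet b₀ b₁) := by
  by_cases hc0 : ht c = 0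
  · exact hc0 ▸ _root_.zero_le
  · have hcm : c ∈ T.elems := (T.lt_mem hlt₀).1
    have hβ : ht c ∈ T.heights := ht_mem_heights T hcm hc0
    obtain ⟨x₀, y₀, hx₀m, hhtx₀, hlx₀, hf₀⟩ := hdc a₀ b₀ h₀ (ht c) hβ (T.lt_ht hlt₀)
    obtain ⟨x₁, y₁, hx₁m, hhtx₁, hlx₁, hf₁⟩ := hdc a₁ b₁ h₁ (ht c) hβ (T.lt_ht hlt₁)
    have hx₀c : x₀ = c := eq_of_lt_lt_ht T hlx₀ hlt₀ hhtx₀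
    have hx₁c : x₁ = c := eq_of_lt_lt_ht T hlx₁ hlt₁ hhtx₁
    have hf₀' : (c, y₀) ∈ f := hx₀c ▸ hf₀
    have hf₁' : (c, y₁) ∈ f := hx₁c ▸ hf₁
    have hy : y₀ = y₁ := hfun hf₀' hf₁'
    have hf₁'' : (c, y₀) ∈ f := by rw [hy]; exact hf₁'
    have hlb₀ : T.lt y₀ b₀ := hmono hf₀' h₀ hlt₀
    have hlb₁ : T.lt y₀ b₁ := hmono hf₁'' h₁ hlt₁
    have hd := meet_isMeet T (hcarr _ h₀).2 (hcarr _ h₁).2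
    have hled : T.le y₀ (T.meet b₀ b₁) := hd.2.2 _ (Or.inl hlb₀) (Or.inl hlb₁)
    have hhty : ht c = ht y₀ := hlev _ hf₀'
    calc ht c = ht y₀ := hhty
      _ ≤ _ := ht_le_of_le T hled

/-- Key lemma 2 (uses injectivity): if the meet of `b₀, b₁` is strictly below both,
then its height is at most the height of the meet of the preimages. -/
lemma key2 (T : SFT) (f : Set (Ordinal × Ordinal))
    (hcarr : Carr T f) (hinj : InjGraph f) (hmono : StrictIncr T f)
    (hlev : LevelPres f) (hdc : DownClosedDom T f)
    {a₀ b₀ a₁ b₁ d : Ordinal} (h₀ : (a₀, b₀) ∈ f) (h₁ : (a₁, b₁) ∈ f)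
    (hlt₀ : T.lt d b₀) (hlt₁ : T.lt d b₁) :
    ht d ≤ ht (T.meet a₀ a₁) := by
  by_cases hd0 : ht d = 0
  · exact hd0 ▸ _root_.zero_le
  · have hdm : d ∈ T.elems := (T.lt_mem hlt₀).1
    have hβ : ht d ∈ T.heights := ht_mem_heights T hdm hd0
    have hht₀ : ht a₀ = ht b₀ := hlev _ h₀
    have hht₁ : ht a₁ = ht b₁ := hlev _ h₁
    obtain ⟨x₀, y₀, hx₀m, hhtx₀, hlx₀, hf₀⟩ :=
      hdc a₀ b₀ h₀ (ht d) hβ (hht₀ ▸ T.lt_ht hlt₀)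
    obtain ⟨x₁, y₁, hx₁m, hhtx₁, hlx₁, hf₁⟩ :=
      hdc a₁ b₁ h₁ (ht d) hβ (hht₁ ▸ T.lt_ht hlt₁)
    have hly₀ : T.lt y₀ b₀ := hmono hf₀ h₀ hlx₀
    have hly₁ : T.lt y₁ b₁ := hmono hf₁ h₁ hlx₁
    have hhy₀ : ht y₀ = ht d := (hlev _ hf₀).symm.trans hhtx₀
    have hhy₁ : ht y₁ = ht d := (hlev _ hf₁).symm.trans hhtx₁
    have hy₀d : y₀ = d := eq_of_lt_lt_ht T hly₀ hlt₀ hhy₀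
    have hy₁d : y₁ = d := eq_of_lt_lt_ht T hly₁ hlt₁ hhy₁
    have hf₀' : (x₀, d) ∈ f := hy₀d ▸ hf₀
    have hf₁' : (x₁, d) ∈ f := hy₁d ▸ hf₁
    have hx : x₀ = x₁ := hinj hf₀' hf₁'
    have hlx₁' : T.lt x₀ a₁ := hx ▸ hlx₁
    have hc := meet_isMeet T (hcarr _ h₀).1 (hcarr _ h₁).1
    have hlec : T.le x₀ (T.meet a₀ a₁) := hc.2.2 _ (Or.inl hlx₀) (Or.inl hlx₁')
    calc ht d = ht x₀ := hhtx₀.symm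
      _ ≤ _ := ht_le_of_le T hlec

end Stmt7Aux

open Stmt7Aux

/-- A strictly increasing, level preserving, downwards closed partial function
from `T` to `T` is injective iff `ht(a₀ ∧ a₁) = ht(f(a₀) ∧ f(a₁))` for all `a₀, a₁` in its
domain. -/
theorem stmt_7 (T : SFT) (f : Set (Ordinal × Ordinal))
    (hcarr : Carr T f) (hfun : FuncGraph f) (hmono : StrictIncr T f)
    (hlev : LevelPres f) (hdc : DownClosedDom T f) :
    InjGraph f ↔ ∀ a₀ b₀ a₁ b₁, (a₀, b₀) ∈ f → (a₁, b₁) ∈ f →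
      ht (T.meet a₀ a₁) = ht (T.meet b₀ b₁) := by
  constructor
  · intro hinj a₀ b₀ a₁ b₁ h₀ h₁
    have ha₀ := (hcarr _ h₀).1
    have hb₀ := (hcarr _ h₀).2
    have ha₁ := (hcarr _ h₁).1
    have hb₁ := (hcarr _ h₁).2
    have hht₀ : ht a₀ = ht b₀ := hlev _ h₀
    have hht₁ : ht a₁ = ht b₁ := hlev _ h₁
    by_cases heq : a₀ = a₁
    · subst heq
      have : b₀ = b₁ := hfun h₀ h₁
      subst this
      rw [meet_eq T ⟨le_refl T ha₀, le_refl T ha₀, fun w h _ => h⟩,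
        meet_eq T ⟨le_refl T hb₀, le_refl T hb₀, fun w h _ => h⟩]
      exact hht₀
    by_cases hlt01 : T.lt a₀ a₁
    · have hbl : T.lt b₀ b₁ := hmono h₀ h₁ hlt01
      rw [meet_eq T ⟨le_refl T ha₀, Or.inl hlt01, fun w h _ => h⟩,
        meet_eq T ⟨le_refl T hb₀, Or.inl hbl, fun w h _ => h⟩]
      exact hht₀
    by_cases hlt10 : T.lt a₁ a₀
    · have hbl : T.lt b₁ b₀ := hmono h₁ h₀ hlt10
      rw [meet_eq T ⟨Or.inl hlt10, le_refl T ha₁, fun w _ h => h⟩,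
        meet_eq T ⟨Or.inl hbl, le_refl T hb₁, fun w _ h => h⟩]
      exact hht₁
    -- incomparable case
    have hc := meet_isMeet T ha₀ ha₁
    have hd := meet_isMeet T hb₀ hb₁
    set c := T.meet a₀ a₁ with hcdef
    set d := T.meet b₀ b₁ with hddef
    have hlc₀ : T.lt c a₀ := by
      rcases hc.1 with h | ⟨he, _⟩
      · exact h
      · exfalso
        rcases he ▸ hc.2.1 with h | ⟨he', _⟩
        · exact hlt01 h
        · exact heq he'
    have hlc₁ : T.lt c a₁ := by
      rcases hc.2.1 with h | ⟨he, _⟩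
      · exact h
      · exfalso
        rcases he ▸ hc.1 with h | ⟨he', _⟩
        · exact hlt10 h
        · exact heq he'.symm
    -- b₀ and b₁ are incomparable
    have hbne : b₀ ≠ b₁ := fun hb => heq (hinj h₀ (hb ▸ h₁))
    have hnotlt : ∀ {p q r s : Ordinal}, (p, q) ∈ f → (r, s) ∈ f → ¬ T.lt p r →
        p ≠ r → ¬ T.lt q s := by
      intro p q r s hp hr hnl hne hqs
      have hhp : ht p = ht q := hlev _ hp
      have hhr : ht r = ht s := hlev _ hr
      have hpr : ht p < ht r := by rw [hhp, hhr]; exact T.lt_ht hqs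
      by_cases hp0 : ht p = 0
      · have hpz : p = 0 := eq_zero_of_ht_zero T (hcarr _ hp).1 hp0
        have hrne : r ≠ 0 := by
          intro hr0
          rw [hpz, hr0] at hpr
          exact lt_irrefl _ hpr
        apply hnl
        rw [hpz]
        rcases zero_le T (hcarr _ hr).1 with h | ⟨he, _⟩
        · exact h
        · exact absurd he.symm hrne
      · have hβ : ht p ∈ T.heights := ht_mem_heights T (hcarr _ hp).1 hp0
        obtain ⟨x, y, hxm, hhtx, hlx, hf⟩ := hdc r s hr (ht p) hβ (hhr ▸ hpr)
        have hly : T.lt y s := hmono hf hr hlx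
        have hhy : ht y = ht q := by rw [← hlev _ hf, hhtx, hhp]
        have hyq : y = q := eq_of_lt_lt_ht T hly hqs hhy
        have hxp : x = p := hinj (hyq ▸ hf) hp
        exact hnl (hxp ▸ hlx)
    have hbl01 : ¬ T.lt b₀ b₁ := hnotlt h₀ h₁ hlt01 heq
    have hbl10 : ¬ T.lt b₁ b₀ := hnotlt h₁ h₀ hlt10 (Ne.symm heq)
    have hld₀ : T.lt d b₀ := by
      rcases hd.1 with h | ⟨he, _⟩
      · exact h
      · exfalso
        rcases he ▸ hd.2.1 with h | ⟨he', _⟩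
        · exact hbl01 h
        · exact hbne he'
    have hld₁ : T.lt d b₁ := by
      rcases hd.2.1 with h | ⟨he, _⟩
      · exact h
      · exfalso
        rcases he ▸ hd.1 with h | ⟨he', _⟩
        · exact hbl10 h
        · exact hbne he'.symm
    exact _root_.le_antisymm (key1 T f hcarr hfun hmono hlev hdc h₀ h₁ hlc₀ hlc₁)
      (key2 T f hcarr hinj hmono hlev hdc h₀ h₁ hld₀ hld₁)
  · intro h x x' y hx hx'
    have hxm := (hcarr _ hx).1
    have hx'm := (hcarr _ hx').1
    have hym := (hcarr _ hx).2
    have hmeq := h x y x' y hx hx'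
    rw [meet_eq T ⟨le_refl T hym, le_refl T hym, fun w hw _ => hw⟩] at hmeq
    have hm := meet_isMeet T hxm hx'm
    have h1 : T.meet x x' = x :=
      eq_of_le_of_ht_eq T hm.1 (by rw [hmeq, ← hlev _ hx])
    have h2 : T.meet x x' = x' :=
      eq_of_le_of_ht_eq T hm.2.1 (by rw [hmeq, ← hlev _ hx'])
    rw [← h1, h2]
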